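/- If a rooted directed graph (Γ, v) has the unique simple path property, then the frame Fr Γ (the graph obtained by contracting each strongly connected component to a point, with edge set the transition edges) is a directed rooted tree rooted at the component of v, and each strongly connected component has a unique transition edge entering it. -/

import Mathlib

structure DGraph : Type 1 where
  V : Type
  E : Type
  ι : E → V
  τ : E → V

namespace DGraph

/-- A directed path from `u` to `w` given by its list of edges. -/
inductive Path (G : DGraph) : G.V → G.V → List G.E → Prop
  | nil (v : G.V) : Path G v v []
  | cons (e : G.E) {w : G.V} {p : List G.E} :
      Path G (G.τ e) w p → Path G (G.ι e) w (e :: p)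

/-- The list of vertices visited by a path `p` starting at `u`. -/
def verts (G : DGraph) (u : G.V) (p : List G.E) : List G.V :=
  u :: p.map G.τ

/-- A simple directed path: a path visiting no vertex twice. -/
def SimplePath (G : DGraph) (u w : G.V) (p : List G.E) : Prop :=
  G.Path u w p ∧ (G.verts u p).Nodup

/-- `w` is reachable from `u` by a directed path. -/
def Reach (G : DGraph) (u w : G.V) : Prop := ∃ p, G.Path u w p

/-- A graph is rooted at `v` if every vertex is reachable from `v`. -/
def Rooted (G : DGraph) (v : G.V) : Prop := ∀ w, G.Reach v w

end DGraph


namespace DGraph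

theorem Path.append {G : DGraph} {u v w : G.V} {p q : List G.E}
    (h1 : G.Path u v p) : G.Path v w q → G.Path u w (p ++ q) := by
  induction h1 with
  | nil v => exact fun h2 => h2
  | cons e h ih => exact fun h2 => Path.cons e (ih h2)

/-- Mutual reachability is an equivalence relation; its classes are the
strongly connected components. -/
def rsetoid (G : DGraph) : Setoid G.V where
  r u w := G.Reach u w ∧ G.Reach w u
  iseqv := ⟨fun u => ⟨⟨[], Path.nil u⟩, ⟨[], Path.nil u⟩⟩,
    fun h => ⟨h.2, h.1⟩,
    fun h1 h2 =>
      ⟨⟨h1.1.choose ++ h2.1.choose, h1.1.choose_spec.append h2.1.choose_spec⟩,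
       ⟨h2.2.choose ++ h1.2.choose, h2.2.choose_spec.append h1.2.choose_spec⟩⟩⟩

/-- A transition edge: an edge between distinct strong components, i.e. one
whose initial vertex is not reachable from its terminal vertex. -/
def Transition (G : DGraph) (e : G.E) : Prop := ¬ G.Reach (G.τ e) (G.ι e)

/-- The frame of a graph: strong components as vertices, transition edges as
edges. -/
def Frame (G : DGraph) : DGraph where
  V := Quotient G.rsetoid
  E := {e : G.E // G.Transition e}
  ι := fun e => Quotient.mk G.rsetoid (G.ι e.1)
  τ := fun e => Quotient.mk G.rsetoid (G.τ e.1)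

lemma reach_self (G : DGraph) (u : G.V) : G.Reach u u := ⟨[], Path.nil u⟩

lemma Reach.trans {G : DGraph} {u v w : G.V} (h1 : G.Reach u v) (h2 : G.Reach v w) :
    G.Reach u w := ⟨_, h1.choose_spec.append h2.choose_spec⟩

lemma reach_edge (G : DGraph) (e : G.E) : G.Reach (G.ι e) (G.τ e) :=
  ⟨[e], Path.cons e (Path.nil _)⟩

lemma reach_of_mem {G : DGraph} {u w x : G.V} {p : List G.E} (h : G.Path u w p)
    (hx : x ∈ G.verts u p) : G.Reach u x ∧ G.Reach x w := by
  induction h with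
  | nil v =>
    simp [verts] at hx; subst hx; exact ⟨G.reach_self _, G.reach_self _⟩
  | cons e h ih =>
    rename_i pp
    have hx' : x = G.ι e ∨ x ∈ G.verts (G.τ e) pp := by
      simpa [verts] using hx
    rcases hx' with h1 | h1
    · subst h1; exact ⟨G.reach_self _, ⟨_, Path.cons e h⟩⟩
    · exact ⟨(G.reach_edge e).trans (ih h1).1, (ih h1).2⟩

lemma edge_reach {G : DGraph} {u w : G.V} {f : G.E} {p : List G.E} (h : G.Path u w p)
    (hf : f ∈ p) : G.Reach u (G.ι f) ∧ G.Reach (G.τ f) w := by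
  induction h with
  | nil v => simp at hf
  | cons e h ih =>
    rcases List.mem_cons.mp hf with h1 | h1
    · subst h1; exact ⟨G.reach_self _, ⟨_, h⟩⟩
    · exact ⟨(G.reach_edge e).trans (ih h1).1, (ih h1).2⟩

lemma exists_suffix {G : DGraph} {u w x : G.V} {p : List G.E} (h : G.Path u w p)
    (hx : x ∈ G.verts u p) : ∃ q, q.Sublist p ∧ G.Path x w q := by
  induction h with
  | nil v =>
    simp [verts] at hx; subst hx; exact ⟨[], List.Sublist.refl _, Path.nil _⟩
  | cons e h ih =>
    rename_i pp
    have hx' : x = G.ι e ∨ x ∈ G.verts (G.τ e) pp := by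
      simpa [verts] using hx
    rcases hx' with h1 | h1
    · subst h1; exact ⟨_, List.Sublist.refl _, Path.cons e h⟩
    · obtain ⟨q, hq1, hq2⟩ := ih h1
      exact ⟨q, hq1.trans (List.sublist_cons_self e pp), hq2⟩

lemma exists_simple {G : DGraph} {w : G.V} :
    ∀ (n : ℕ) (p : List G.E) (u : G.V), p.length ≤ n → G.Path u w p →
      ∃ q, q.Sublist p ∧ G.SimplePath u w q := by
  intro n
  induction n with
  | zero =>
    intro p u hl h
    have hp : p = [] := List.length_eq_zero_iff.mp (Nat.le_zero.mp hl)
    subst hp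
    cases h with
    | nil => exact ⟨[], List.Sublist.refl _, Path.nil _, by simp [verts]⟩
  | succ n ih =>
    intro p u hl h
    cases h with
    | nil => exact ⟨[], List.Sublist.refl _, Path.nil _, by simp [verts]⟩
    | cons e h =>
      rename_i p'
      have hl' : p'.length ≤ n := by simpa using hl
      obtain ⟨q, hq1, hq2, hq3⟩ := ih p' (G.τ e) hl' h
      by_cases hmem : G.ι e ∈ G.verts (G.τ e) q
      · obtain ⟨r, hr1, hr2⟩ := exists_suffix hq2 hmem
        have hrl : r.length ≤ n :=
          le_trans (hr1.length_le.trans hq1.length_le) hl'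
        obtain ⟨s, hs1, hs2⟩ := ih r (G.ι e) hrl hr2
        exact ⟨s, (hs1.trans (hr1.trans hq1)).trans (List.sublist_cons_self e p'), hs2⟩
      · refine ⟨e :: q, hq1.cons₂ e, Path.cons e hq2, ?_⟩
        have : G.verts (G.ι e) (e :: q) = G.ι e :: G.verts (G.τ e) q := by
          simp [verts]
        rw [this, List.nodup_cons]
        exact ⟨hmem, hq3⟩

lemma exists_framePath {G : DGraph} {u w : G.V} {p : List G.E} (h : G.Path u w p) :
    ∃ P, G.Frame.Path (Quotient.mk G.rsetoid u) (Quotient.mk G.rsetoid w) P := by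
  induction h with
  | nil v => exact ⟨[], Path.nil _⟩
  | cons e h ih =>
    obtain ⟨P, hP⟩ := ih
    by_cases he : G.Transition e
    · exact ⟨⟨e, he⟩ :: P, Path.cons (G := G.Frame) ⟨e, he⟩ hP⟩
    · have heq : Quotient.mk G.rsetoid (G.ι e) = Quotient.mk G.rsetoid (G.τ e) :=
        Quotient.sound ⟨G.reach_edge e, not_not.mp he⟩
      exact ⟨P, heq ▸ hP⟩

lemma transition_snoc {G : DGraph} {v : G.V} {e : G.E} (he : G.Transition e)
    {p : List G.E} (hp : G.SimplePath v (G.ι e) p) :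
    G.SimplePath v (G.τ e) (p ++ [e]) := by
  refine ⟨hp.1.append (Path.cons e (Path.nil _)), ?_⟩
  have hτ : G.τ e ∉ G.verts v p := fun hmem => he (reach_of_mem hp.1 hmem).2
  have hv : G.verts v (p ++ [e]) = G.verts v p ++ [G.τ e] := by simp [verts]
  rw [hv, List.nodup_append]
  exact ⟨hp.2, List.nodup_singleton _, by simpa [List.disjoint_singleton] using (fun a ha h => hτ (h ▸ ha) : ∀ a ∈ G.verts v p, ¬a = G.τ e)⟩

lemma transition_unique {G : DGraph} {v : G.V}
    (huspp : ∀ w : G.V, ∃! p : List G.E, G.SimplePath v w p)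
    {e e' : G.E} (he : G.Transition e) (he' : G.Transition e')
    (hC : Quotient.mk G.rsetoid (G.τ e) = Quotient.mk G.rsetoid (G.τ e')) :
    e = e' := by
  have hee' : G.Reach (G.τ e) (G.τ e') := (Quotient.exact hC).1
  have he'e : G.Reach (G.τ e') (G.τ e) := (Quotient.exact hC).2
  obtain ⟨r, hr⟩ := hee'
  have hee' : G.Reach (G.τ e) (G.τ e') := ⟨r, hr⟩
  obtain ⟨p, hp, -⟩ := huspp (G.ι e)
  obtain ⟨p', hp', -⟩ := huspp (G.ι e')
  have hsnoc' : G.SimplePath v (G.τ e') (p' ++ [e']) := transition_snoc he' hp'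
  have hbig : G.Path v (G.τ e') ((p ++ [e]) ++ r) :=
    (hp.1.append (Path.cons e (Path.nil _))).append hr
  obtain ⟨s, hs_sub, hs⟩ := exists_simple _ _ _ le_rfl hbig
  have hseq : s = p' ++ [e'] := (huspp (G.τ e')).unique hs hsnoc'
  have hmem : e' ∈ (p ++ [e]) ++ r := hs_sub.subset (hseq ▸ (by simp : e' ∈ p' ++ [e']))
  rcases List.mem_append.mp hmem with h1 | h1
  · rcases List.mem_append.mp h1 with h2 | h2
    · exact absurd (hee'.trans (edge_reach hp.1 h2).2) he
    · simp at h2; exact h2.symm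
  · exact absurd (he'e.trans (edge_reach hr h1).1) he'

lemma no_transition_into_root {G : DGraph} {v : G.V} (hroot : G.Rooted v) {e : G.E}
    (he : G.Transition e)
    (h : Quotient.mk G.rsetoid (G.τ e) = Quotient.mk G.rsetoid v) : False :=
  he ((Quotient.exact h).1.trans (hroot (G.ι e)))

lemma Path.snoc_cases {G : DGraph} {u w : G.V} {p : List G.E} (h : G.Path u w p) :
    (p = [] ∧ u = w) ∨ ∃ e q, p = q ++ [e] ∧ G.Path u (G.ι e) q ∧ G.τ e = w := by
  induction h with
  | nil v => exact Or.inl ⟨rfl, rfl⟩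
  | cons e h ih =>
    rcases ih with ⟨h1, h2⟩ | ⟨f, q, h1, h2, h3⟩
    · subst h1
      exact Or.inr ⟨e, [], rfl, Path.nil _, h2⟩
    · subst h1
      exact Or.inr ⟨f, e :: q, rfl, Path.cons e h2, h3⟩

lemma framePath_unique {G : DGraph} {v : G.V} (hroot : G.Rooted v)
    (huspp : ∀ w : G.V, ∃! p : List G.E, G.SimplePath v w p) :
    ∀ (n : ℕ) (P : List G.Frame.E), P.length ≤ n → ∀ (C : G.Frame.V),
      G.Frame.Path (Quotient.mk G.rsetoid v) C P →
      ∀ Q, G.Frame.Path (Quotient.mk G.rsetoid v) C Q → P = Q := by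
  intro n
  induction n with
  | zero =>
    intro P hl C hP Q hQ
    have hP0 : P = [] := List.length_eq_zero_iff.mp (Nat.le_zero.mp hl)
    subst hP0
    rcases hP.snoc_cases with ⟨-, hC⟩ | ⟨e, q, h1, -, -⟩
    · rcases hQ.snoc_cases with ⟨h1, -⟩ | ⟨f, q, -, -, h3⟩
      · exact h1.symm
      · exact absurd (h3.trans hC.symm) (fun hh => no_transition_into_root hroot f.2 hh)
    · simp at h1
  | succ n ih =>
    intro P hl C hP Q hQ
    rcases hP.snoc_cases with ⟨hP0, hC⟩ | ⟨e, P₁, h1, h2, h3⟩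
    · subst hP0
      rcases hQ.snoc_cases with ⟨h1, -⟩ | ⟨f, q, -, -, h3⟩
      · exact h1.symm
      · exact absurd (h3.trans hC.symm) (fun hh => no_transition_into_root hroot f.2 hh)
    · rcases hQ.snoc_cases with ⟨hQ0, hC⟩ | ⟨f, Q₁, h1', h2', h3'⟩
      · exact absurd (h3.trans hC.symm) (fun hh => no_transition_into_root hroot e.2 hh)
      · have hef : e = f := by
          refine Subtype.ext (transition_unique huspp e.2 f.2 ?_)
          exact (h3.trans h3'.symm : G.Frame.τ e = G.Frame.τ f)
        subst hef
        have hl1 : P₁.length ≤ n := by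
          subst h1; simp at hl; omega
        have hP₁Q₁ : P₁ = Q₁ := ih P₁ hl1 (G.Frame.ι e) h2 Q₁ h2'
        rw [h1, h1', hP₁Q₁]

/-- If a rooted directed graph `(Γ, v)` has the unique simple path property,
then its frame is a directed rooted tree rooted at the component of `v`
(each component is reached from the component of `v` by a unique directed
path), and each strong component other than that of `v` has a unique
transition edge entering it. -/
theorem frame_is_tree (G : DGraph) (v : G.V) (hroot : G.Rooted v)
    (huspp : ∀ w : G.V, ∃! p : List G.E, G.SimplePath v w p) :
    (∀ C : G.Frame.V, ∃! p : List G.Frame.E,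
        G.Frame.Path (Quotient.mk G.rsetoid v) C p) ∧
      (∀ C : G.Frame.V, C ≠ Quotient.mk G.rsetoid v →
        ∃! e : {e : G.E // G.Transition e},
          Quotient.mk G.rsetoid (G.τ e.1) = C) := by
  have hex : ∀ C : G.Frame.V, ∃ p : List G.Frame.E,
      G.Frame.Path (Quotient.mk G.rsetoid v) C p := by
    intro C
    obtain ⟨w, rfl⟩ := Quotient.exists_rep C
    obtain ⟨p, hp⟩ := hroot w
    exact exists_framePath hp
  constructor
  · intro C
    obtain ⟨P, hP⟩ := hex C
    exact ⟨P, hP, fun Q hQ => framePath_unique hroot huspp Q.length Q le_rfl C hQ P hP⟩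
  · intro C hC
    obtain ⟨P, hP⟩ := hex C
    rcases hP.snoc_cases with ⟨-, h2⟩ | ⟨e, q, -, -, h3⟩
    · exact absurd h2.symm hC
    · refine ⟨e, h3, fun f hf => ?_⟩
      exact Subtype.ext (transition_unique huspp f.2 e.2 (hf.trans h3.symm))

end DGraph
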